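/- Let J : ℤ → ℤ[q^{±1/2}] with J(-n) = -J(n) for all n, and let x be an operator in the ℤ[q^{±1/2}]-span of elements E^a Q^b + E^{-a} Q^{-b} (a,b ∈ ℤ) acting on functions ℤ → ℤ[q^{±1/2}]. If ((E - E^{-1})x)J = 0 then xJ = 0. -/

import Mathlib

open LaurentPolynomial

/-- Sequences of Laurent polynomials in `q^{1/2}`, as a module over `ℤ[q^{±1/2}]`. -/
abbrev V : Type := ℤ → LaurentPolynomial ℤ

/-- The operator `E^a Q^b`: `(E^a Q^b f)(n) = q^{(n+a)b} f(n+a)`. -/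
noncomputable def EQpow (a b : ℤ) : Module.End (LaurentPolynomial ℤ) V where
  toFun f := fun n => T (2 * (n + a) * b) * f (n + a)
  map_add' f g := by funext n; simp [mul_add]
  map_smul' c f := by funext n; simp [Pi.smul_apply, smul_eq_mul]; ring

/-- The shift operator `E`. -/
noncomputable def Eop : Module.End (LaurentPolynomial ℤ) V where
  toFun f := fun n => f (n + 1)
  map_add' _ _ := rfl
  map_smul' _ _ := rfl

/-- The backward shift `E⁻¹`. -/
noncomputable def Eop' : Module.End (LaurentPolynomial ℤ) V where
  toFun f := fun n => f (n - 1)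
  map_add' _ _ := rfl
  map_smul' _ _ := rfl

lemma odd_aux (J : V) (hJ : ∀ n : ℤ, J (-n) = -J n)
    (x : Module.End (LaurentPolynomial ℤ) V)
    (hx : x ∈ Submodule.span (LaurentPolynomial ℤ)
      {y : Module.End (LaurentPolynomial ℤ) V | ∃ a b : ℤ, y = EQpow a b + EQpow (-a) (-b)}) :
    ∀ n : ℤ, (x J) (-n) = -((x J) n) := by
  induction hx using Submodule.span_induction with
  | mem y hy =>
    obtain ⟨a, b, rfl⟩ := hy
    intro n
    show T (2 * (-n + a) * b) * J (-n + a) + T (2 * (-n + -a) * -b) * J (-n + -a)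
      = -(T (2 * (n + a) * b) * J (n + a) + T (2 * (n + -a) * -b) * J (n + -a))
    have h1 : (-n + a : ℤ) = -(n - a) := by ring
    have h2 : (-n + -a : ℤ) = -(n + a) := by ring
    rw [h1, h2, hJ, hJ]
    have e1 : 2 * (-(n - a)) * b = 2 * (n + -a) * -b := by ring
    have e2 : 2 * (-(n + a)) * -b = 2 * (n + a) * b := by ring
    rw [e1, e2]
    have h3 : (n - a : ℤ) = n + -a := by ring
    rw [h3]; ring
  | zero => intro n; simp
  | add y z _ _ hy hz =>
    intro n
    simp only [LinearMap.add_apply, Pi.add_apply, hy n, hz n]; ring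
  | smul c y _ hy =>
    intro n
    simp only [LinearMap.smul_apply, Pi.smul_apply, smul_eq_mul, hy n]; ring

/-- If `J` is odd and `x` lies in the `ℤ[q^{±1/2}]`-span of the symmetric operators
`E^a Q^b + E^{-a} Q^{-b}`, and `((E - E⁻¹)x)J = 0`, then `xJ = 0`. -/
theorem stmt7 (J : V) (hJ : ∀ n : ℤ, J (-n) = -J n)
    (x : Module.End (LaurentPolynomial ℤ) V)
    (hx : x ∈ Submodule.span (LaurentPolynomial ℤ)
      {y : Module.End (LaurentPolynomial ℤ) V | ∃ a b : ℤ, y = EQpow a b + EQpow (-a) (-b)})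
    (h : ((Eop - Eop') * x) J = 0) :
    x J = 0 := by
  have hodd := odd_aux J hJ x hx
  set g : V := x J with hg
  have hper : ∀ n : ℤ, g (n + 1) = g (n - 1) := by
    intro n
    have h0 := congrFun h n
    have h1 : g (n + 1) - g (n - 1) = 0 := h0
    exact sub_eq_zero.mp h1
  have hp2 : ∀ n : ℤ, g (n + 2) = g n := by
    intro n
    have := hper (n + 1)
    rw [show n + 1 + 1 = n + 2 from by ring, show n + 1 - 1 = n from by ring] at this
    exact this
  have hshift : ∀ (m k : ℤ), g (m + 2 * k) = g m := by
    intro m k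
    induction k using Int.induction_on with
    | zero => simp
    | succ i ih =>
      have e : m + 2 * ((i : ℤ) + 1) = (m + 2 * (i : ℤ)) + 2 := by ring
      rw [e, hp2]; exact ih
    | pred i ih =>
      have e : m + 2 * (-(i : ℤ)) = (m + 2 * (-((i : ℤ) + 1))) + 2 := by ring
      rw [e, hp2] at ih
      have e2 : m + 2 * (-(i : ℤ) - 1) = m + 2 * (-((i : ℤ) + 1)) := by ring
      rw [e2]
      exact ih
  have htwo : ∀ p : LaurentPolynomial ℤ, p = -p → p = 0 := by
    intro p hp
    have h2 : (2 : ℤ) • p = 0 := by rw [two_smul]; nth_rewrite 2 [hp]; exact add_neg_cancel p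
    exact (smul_eq_zero.mp h2).resolve_left (by norm_num)
  have g0 : g 0 = 0 := by
    have := hodd 0
    simp only [neg_zero] at this
    exact htwo _ this
  have g1 : g 1 = 0 := by
    have h1 : g 1 = g (-1) := by
      have := hper 0
      rw [show (0:ℤ) + 1 = 1 from by ring, show (0:ℤ) - 1 = -1 from by ring] at this
      exact this
    have h2 : g (-1) = -g 1 := hodd 1
    exact htwo _ (h1.trans h2)
  funext n
  show g n = 0
  rcases Int.even_or_odd n with ⟨k, hk⟩ | ⟨k, hk⟩
  · have hn : n = 0 + 2 * k := by omega
    rw [hn, hshift]; exact g0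
  · have hn : n = 1 + 2 * k := by omega
    rw [hn, hshift]; exact g1
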